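/- arXiv:2601.22736 — 3 statements merged into one kernel-verified Lean document; each statement's English description precedes it below -/
import Mathlib

section
/- Let C be a nonempty index set and L, U : C → ℝ with L c ≤ U c for all c ∈ C. Suppose all four extrema are attained: there exist indices realizing L̲ = sInf (range L), L̄ = sSup (range L), U̲ = sInf (range U), Ū = sSup (range U), and suppose L̄ ≤ U̲. Then the set difference (⋃_{c ∈ C} [L c, U c]) \ (⋂_{c ∈ C} [L c, U c]) equals [L̲, L̄) ∪ (U̲, Ū] (the half-open lower band Ico L̲ L̄ together with the half-open upper band Ioc U̲ Ū). -/
/-- The outer band (union minus intersection) of the intervals `[L c, U c]` is the half-open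
lower band `[L̲, L̄)` together with the half-open upper band `(U̲, Ū]`. -/
theorem union_diff_inter_Icc_eq_bands
    {C : Type*} [Nonempty C] (L U : C → ℝ)
    (hLU : ∀ c : C, L c ≤ U c)
    (hLbb : BddBelow (Set.range L)) (hLba : BddAbove (Set.range L))
    (hUbb : BddBelow (Set.range U)) (hUba : BddAbove (Set.range U))
    (hLinf : ∃ c : C, L c = sInf (Set.range L))
    (hLsup : ∃ c : C, L c = sSup (Set.range L))
    (hUinf : ∃ c : C, U c = sInf (Set.range U))
    (hUsup : ∃ c : C, U c = sSup (Set.range U))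
    (hmid : sSup (Set.range L) ≤ sInf (Set.range U)) :
    (⋃ c : C, Set.Icc (L c) (U c)) \ (⋂ c : C, Set.Icc (L c) (U c)) =
      Set.Ico (sInf (Set.range L)) (sSup (Set.range L)) ∪
      Set.Ioc (sInf (Set.range U)) (sSup (Set.range U)) := by
  obtain ⟨cL, hcL⟩ := hLinf
  obtain ⟨cL', hcL'⟩ := hLsup
  obtain ⟨cU, hcU⟩ := hUinf
  obtain ⟨cU', hcU'⟩ := hUsup
  have hL1 : ∀ c, sInf (Set.range L) ≤ L c := fun c => csInf_le hLbb ⟨c, rfl⟩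
  have hL2 : ∀ c, L c ≤ sSup (Set.range L) := fun c => le_csSup hLba ⟨c, rfl⟩
  have hU1 : ∀ c, sInf (Set.range U) ≤ U c := fun c => csInf_le hUbb ⟨c, rfl⟩
  have hU2 : ∀ c, U c ≤ sSup (Set.range U) := fun c => le_csSup hUba ⟨c, rfl⟩
  ext x
  simp only [Set.mem_diff, Set.mem_iUnion, Set.mem_iInter, Set.mem_Icc, Set.mem_union,
    Set.mem_Ico, Set.mem_Ioc]
  constructor
  · rintro ⟨⟨c, hlc, huc⟩, hnot⟩
    push_neg at hnot
    obtain ⟨c', hc'⟩ := hnot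
    by_cases hx : x < sSup (Set.range L)
    · exact Or.inl ⟨(hL1 c).trans hlc, hx⟩
    · push_neg at hx
      refine Or.inr ⟨?_, (huc.trans (hU2 c))⟩
      have h1 : L c' ≤ x := (hL2 c').trans hx
      have h2 := hc' h1
      exact lt_of_le_of_lt (hU1 c') h2
  · rintro (⟨h1, h2⟩ | ⟨h1, h2⟩)
    · refine ⟨⟨cL, by linarith [hcL], by linarith [hcL, hmid, hU1 cL]⟩, ?_⟩
      intro h
      have := (h cL').1
      linarith [hcL']
    · refine ⟨⟨cU', by linarith [hcU', hmid, hL2 cU'], by linarith [hcU']⟩, ?_⟩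
      intro h
      have := (h cU).2
      linarith [hcU]
end

section
/- Let C be a nonempty index set and L, U : C → ℝ with L c ≤ U c for all c ∈ C. Suppose all four extrema are attained: there exist indices realizing L̲ = sInf (range L), L̄ = sSup (range L), U̲ = sInf (range U), Ū = sSup (range U), and suppose L̄ ≤ U̲. Then the set difference (⋃_{c ∈ C} [L c, U c]) \ (⋂_{c ∈ C} [L c, U c]) equals [L̲, L̄) ∪ (U̲, Ū]. -/
/-- The sample-uncertainty (outer band) region for the ATE: the union of the intervals
`[L c, U c]` minus their intersection equals `[L̲, L̄) ∪ (U̲, Ū]`. -/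
theorem ate_union_diff_inter_Icc_eq_bands
    {C : Type*} [Nonempty C] (L U : C → ℝ)
    (hLU : ∀ c : C, L c ≤ U c)
    (hLbb : BddBelow (Set.range L)) (hLba : BddAbove (Set.range L))
    (hUbb : BddBelow (Set.range U)) (hUba : BddAbove (Set.range U))
    (hLinf : ∃ c : C, L c = sInf (Set.range L))
    (hLsup : ∃ c : C, L c = sSup (Set.range L))
    (hUinf : ∃ c : C, U c = sInf (Set.range U))
    (hUsup : ∃ c : C, U c = sSup (Set.range U))
    (hmid : sSup (Set.range L) ≤ sInf (Set.range U)) :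
    (⋃ c : C, Set.Icc (L c) (U c)) \ (⋂ c : C, Set.Icc (L c) (U c)) =
      Set.Ico (sInf (Set.range L)) (sSup (Set.range L)) ∪
      Set.Ioc (sInf (Set.range U)) (sSup (Set.range U)) := by
  obtain ⟨c0, hc0⟩ := hLinf
  obtain ⟨c1, hc1⟩ := hLsup
  obtain ⟨c2, hc2⟩ := hUinf
  obtain ⟨c3, hc3⟩ := hUsup
  have hLle : ∀ i, sInf (Set.range L) ≤ L i ∧ L i ≤ sSup (Set.range L) :=
    fun i => ⟨csInf_le hLbb ⟨i, rfl⟩, le_csSup hLba ⟨i, rfl⟩⟩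
  have hUle : ∀ i, sInf (Set.range U) ≤ U i ∧ U i ≤ sSup (Set.range U) :=
    fun i => ⟨csInf_le hUbb ⟨i, rfl⟩, le_csSup hUba ⟨i, rfl⟩⟩
  ext x
  simp only [Set.mem_diff, Set.mem_iUnion, Set.mem_iInter, Set.mem_Icc, Set.mem_union,
    Set.mem_Ico, Set.mem_Ioc]
  constructor
  · rintro ⟨⟨i, hi1, hi2⟩, hnot⟩
    push_neg at hnot
    obtain ⟨j, hj⟩ := hnot
    obtain ⟨hiL, hiL'⟩ := hLle i
    obtain ⟨hiU, hiU'⟩ := hUle i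
    obtain ⟨hjL, hjL'⟩ := hLle j
    obtain ⟨hjU, hjU'⟩ := hUle j
    rcases lt_or_ge x (L j) with h | h
    · left; constructor <;> linarith
    · right; have := hj h; constructor <;> linarith
  · rintro (⟨h1, h2⟩ | ⟨h1, h2⟩)
    · obtain ⟨h0L, _⟩ := hUle c0
      refine ⟨⟨c0, by linarith [hc0 ▸ le_refl (L c0)], ?_⟩, ?_⟩
      · rw [hc0] at *; linarith
      · intro hall
        have := (hall c1).1
        rw [hc1] at this; linarith
    · obtain ⟨_, h3U⟩ := hLle c3
      refine ⟨⟨c3, ?_, by rw [hc3]; linarith⟩, ?_⟩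
      · linarith
      · intro hall
        have := (hall c2).2
        rw [hc2] at this; linarith
end

section
/- Let a : Fin 2 → Fin 2 → Fin 2 → ℝ be given nonnegative reals (where a y x z represents P(Y=y, X=x | Z=z)) with ∑_{y,x} a y x z = 1 for each z. Define the polytope Q of response-variable distributions as the set of q : Fin 4 → Fin 4 → ℝ with all q i j ≥ 0 satisfying the eight linear constraints: a 0 0 0 = q 0 0 + q 1 0 + q 0 1 + q 1 1; a 0 1 0 = q 2 0 + q 2 2 + q 3 0 + q 3 2; a 1 0 0 = q 0 2 + q 0 3 + q 1 2 + q 1 3; a 1 1 0 = q 2 1 + q 2 3 + q 3 1 + q 3 3; a 0 0 1 = q 0 0 + q 2 0 + q 0 1 + q 2 1; a 0 1 1 = q 1 0 + q 1 2 + q 3 0 + q 3 2; a 1 0 1 = q 0 2 + q 0 3 + q 2 2 + q 2 3; a 1 1 1 = q 1 1 + q 1 3 + q 3 1 + q 3 3. Define F(q) = ∑_{i=0}^{3} (q i 1 + q i 3) and G(q) = ∑_{i=0}^{3} (q i 2 + q i 3). If Q is nonempty, then there exists q* ∈ Q that simultaneously attains the maximum of F over Q and the minimum of G over Q. -/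
set_option maxHeartbeats 1000000 in
/-- IV-graph response-variable polytope: the set `Q` of response-variable joint probability
assignments compatible with the observational conditionals `a y x z = P(Y=y, X=x | Z=z)` is
cut out by nonnegativity and eight linear constraints. If `Q` is nonempty, some `qstar ∈ Q`
simultaneously attains the maximum of `F q = P(y₁|do(x₁))` and the minimum of
`G q = P(y₁|do(x₀))` over `Q`. -/
theorem iv_simultaneous_max_min
    (a : Fin 2 → Fin 2 → Fin 2 → ℝ)
    (ha_nonneg : ∀ y x z, 0 ≤ a y x z)
    (ha_sum : ∀ z : Fin 2, ∑ y : Fin 2, ∑ x : Fin 2, a y x z = 1)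
    (Q : Set (Fin 4 → Fin 4 → ℝ))
    (hQ : Q = {q : Fin 4 → Fin 4 → ℝ |
      (∀ i j : Fin 4, 0 ≤ q i j) ∧
      a 0 0 0 = q 0 0 + q 1 0 + q 0 1 + q 1 1 ∧
      a 0 1 0 = q 2 0 + q 2 2 + q 3 0 + q 3 2 ∧
      a 1 0 0 = q 0 2 + q 0 3 + q 1 2 + q 1 3 ∧
      a 1 1 0 = q 2 1 + q 2 3 + q 3 1 + q 3 3 ∧
      a 0 0 1 = q 0 0 + q 2 0 + q 0 1 + q 2 1 ∧
      a 0 1 1 = q 1 0 + q 1 2 + q 3 0 + q 3 2 ∧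
      a 1 0 1 = q 0 2 + q 0 3 + q 2 2 + q 2 3 ∧
      a 1 1 1 = q 1 1 + q 1 3 + q 3 1 + q 3 3})
    (F G : (Fin 4 → Fin 4 → ℝ) → ℝ)
    (hF : F = fun q => ∑ i : Fin 4, (q i 1 + q i 3))
    (hG : G = fun q => ∑ i : Fin 4, (q i 2 + q i 3))
    (hne : Q.Nonempty) :
    ∃ qstar ∈ Q, (∀ q ∈ Q, F q ≤ F qstar) ∧ (∀ q ∈ Q, G qstar ≤ G q) := by
  subst hF
  subst hG
  -- Q is closed
  have hclosed : IsClosed Q := by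
    rw [hQ]
    have h1 : IsClosed {q : Fin 4 → Fin 4 → ℝ | ∀ i j : Fin 4, 0 ≤ q i j} := by
      have he : {q : Fin 4 → Fin 4 → ℝ | ∀ i j : Fin 4, 0 ≤ q i j}
          = ⋂ (i : Fin 4) (j : Fin 4), {q : Fin 4 → Fin 4 → ℝ | 0 ≤ q i j} := by
        ext q; simp [Set.mem_iInter]
      rw [he]
      exact isClosed_iInter fun i => isClosed_iInter fun j =>
        isClosed_le continuous_const (by fun_prop)
    simp only [Set.setOf_and]
    refine h1.inter (IsClosed.inter ?_ (IsClosed.inter ?_ (IsClosed.inter ?_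
      (IsClosed.inter ?_ (IsClosed.inter ?_ (IsClosed.inter ?_ (IsClosed.inter ?_ ?_))))))) <;>
      exact isClosed_eq (by fun_prop) (by fun_prop)
  -- Q is bounded: contained in [0,1]^16
  have hsub : Q ⊆ Set.Icc 0 1 := by
    intro q hq
    rw [hQ] at hq
    obtain ⟨hp, c1, c2, c3, c4, c5, c6, c7, c8⟩ := hq
    have hs := ha_sum 0
    simp only [Fin.sum_univ_two] at hs
    have htot : ∑ i : Fin 4, ∑ j : Fin 4, q i j = 1 := by
      simp only [Fin.sum_univ_four]; linarith
    have hub : ∀ i j : Fin 4, q i j ≤ 1 := by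
      intro i j
      calc q i j ≤ ∑ j' : Fin 4, q i j' :=
            Finset.single_le_sum (fun k _ => hp i k) (Finset.mem_univ j)
        _ ≤ ∑ i' : Fin 4, ∑ j' : Fin 4, q i' j' :=
            Finset.single_le_sum (fun k _ => Finset.sum_nonneg fun l _ => hp k l)
              (Finset.mem_univ i)
        _ = 1 := htot
    exact Set.mem_Icc.mpr ⟨fun i j => hp i j, fun i j => hub i j⟩
  have hcpt : IsCompact Q := IsCompact.of_isClosed_subset isCompact_Icc hclosed hsub
  -- pick qb maximizing the mass of row 0
  obtain ⟨qb, hqbQ, hmax⟩ := hcpt.exists_isMaxOn hne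
    ((by fun_prop : Continuous fun q : Fin 4 → Fin 4 → ℝ =>
      q 0 0 + q 0 1 + q 0 2 + q 0 3).continuousOn)
  have hqbm : ∀ q ∈ Q, q 0 0 + q 0 1 + q 0 2 + q 0 3
      ≤ qb 0 0 + qb 0 1 + qb 0 2 + qb 0 3 := fun q hq => hmax hq
  have hqbQ' := hqbQ
  rw [hQ] at hqbQ'
  obtain ⟨hb, e1, e2, e3, e4, e5, e6, e7, e8⟩ := hqbQ'
  -- row masses of qb
  set m0 := qb 0 0 + qb 0 1 + qb 0 2 + qb 0 3 with hm0
  set m1 := qb 1 0 + qb 1 1 + qb 1 2 + qb 1 3 with hm1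
  set m2 := qb 2 0 + qb 2 1 + qb 2 2 + qb 2 3 with hm2
  set m3 := qb 3 0 + qb 3 1 + qb 3 2 + qb 3 3 with hm3
  set f3 := max 0 (max (a 1 1 1 - m1) (a 1 1 0 - m2)) with hf3
  set g0 := min m0 (min (a 1 0 0) (a 1 0 1)) with hg0
  have hm0nn : 0 ≤ m0 := by linarith [hb 0 0, hb 0 1, hb 0 2, hb 0 3]
  have hm1nn : 0 ≤ m1 := by linarith [hb 1 0, hb 1 1, hb 1 2, hb 1 3]
  have hm2nn : 0 ≤ m2 := by linarith [hb 2 0, hb 2 1, hb 2 2, hb 2 3]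
  have hm3nn : 0 ≤ m3 := by linarith [hb 3 0, hb 3 1, hb 3 2, hb 3 3]
  have hfb3 : f3 ≤ qb 3 1 + qb 3 3 := by
    rw [hf3]
    exact max_le (by linarith [hb 3 1, hb 3 3])
      (max_le (by linarith [hb 1 0, hb 1 2]) (by linarith [hb 2 0, hb 2 2]))
  have hf30 : 0 ≤ f3 := by rw [hf3]; exact le_max_left _ _
  have hf3m1 : a 1 1 1 - m1 ≤ f3 := by
    rw [hf3]; exact le_max_of_le_right (le_max_left _ _)
  have hf3m2 : a 1 1 0 - m2 ≤ f3 := by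
    rw [hf3]; exact le_max_of_le_right (le_max_right _ _)
  have hf3m3 : f3 ≤ m3 := by linarith [hb 3 0, hb 3 2]
  have hf3a1 : f3 ≤ a 1 1 1 := by linarith [hb 1 1, hb 1 3]
  have hf3a0 : f3 ≤ a 1 1 0 := by linarith [hb 2 1, hb 2 3]
  have hg0m0 : g0 ≤ m0 := by rw [hg0]; exact min_le_left _ _
  have hg0a0 : g0 ≤ a 1 0 0 := by
    rw [hg0]; exact le_trans (min_le_right _ _) (min_le_left _ _)
  have hg0a1 : g0 ≤ a 1 0 1 := by
    rw [hg0]; exact le_trans (min_le_right _ _) (min_le_right _ _)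
  have hgb0 : qb 0 2 + qb 0 3 ≤ g0 := by
    rw [hg0]
    exact le_min (by linarith [hb 0 0, hb 0 1])
      (le_min (by linarith [hb 1 2, hb 1 3]) (by linarith [hb 2 2, hb 2 3]))
  have hg00 : 0 ≤ g0 := by linarith [hb 0 2, hb 0 3]
  have hg0l1 : a 1 0 0 - m1 ≤ g0 := by linarith [hb 1 0, hb 1 1]
  have hg0l2 : a 1 0 1 - m2 ≤ g0 := by linarith [hb 2 0, hb 2 1]
  -- per-row coupling facts
  have hr1 : min (a 1 1 1 - f3) (a 1 0 0 - g0) + max (a 1 1 1 - f3) (a 1 0 0 - g0)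
      = (a 1 1 1 - f3) + (a 1 0 0 - g0) := min_add_max _ _
  have hr2 : min (a 1 1 0 - f3) (a 1 0 1 - g0) + max (a 1 1 0 - f3) (a 1 0 1 - g0)
      = (a 1 1 0 - f3) + (a 1 0 1 - g0) := min_add_max _ _
  have hmin1a : min (a 1 1 1 - f3) (a 1 0 0 - g0) ≤ a 1 1 1 - f3 := min_le_left _ _
  have hmin1b : min (a 1 1 1 - f3) (a 1 0 0 - g0) ≤ a 1 0 0 - g0 := min_le_right _ _
  have hmin10 : 0 ≤ min (a 1 1 1 - f3) (a 1 0 0 - g0) :=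
    le_min (by linarith) (by linarith)
  have hmax1 : max (a 1 1 1 - f3) (a 1 0 0 - g0) ≤ m1 :=
    max_le (by linarith) (by linarith)
  have hmin2a : min (a 1 1 0 - f3) (a 1 0 1 - g0) ≤ a 1 1 0 - f3 := min_le_left _ _
  have hmin2b : min (a 1 1 0 - f3) (a 1 0 1 - g0) ≤ a 1 0 1 - g0 := min_le_right _ _
  have hmin20 : 0 ≤ min (a 1 1 0 - f3) (a 1 0 1 - g0) :=
    le_min (by linarith) (by linarith)
  have hmax2 : max (a 1 1 0 - f3) (a 1 0 1 - g0) ≤ m2 :=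
    max_le (by linarith) (by linarith)
  -- the case disjunctions
  have hfc : f3 = 0 ∨ f3 = a 1 1 1 - m1 ∨ f3 = a 1 1 0 - m2 := by
    rw [hf3]
    rcases max_choice 0 (max (a 1 1 1 - m1) (a 1 1 0 - m2)) with h | h
    · exact Or.inl h
    · rw [h]
      rcases max_choice (a 1 1 1 - m1) (a 1 1 0 - m2) with h' | h'
      · exact Or.inr (Or.inl h')
      · exact Or.inr (Or.inr h')
  have hgc : g0 = m0 ∨ g0 = a 1 0 0 ∨ g0 = a 1 0 1 := by
    rw [hg0]
    rcases min_choice m0 (min (a 1 0 0) (a 1 0 1)) with h | h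
    · exact Or.inl h
    · rw [h]
      rcases min_choice (a 1 0 0) (a 1 0 1) with h' | h'
      · exact Or.inr (Or.inl h')
      · exact Or.inr (Or.inr h')
  refine ⟨![![0, m0 - g0, 0, g0],
    ![m1 - max (a 1 1 1 - f3) (a 1 0 0 - g0),
      (a 1 1 1 - f3) - min (a 1 1 1 - f3) (a 1 0 0 - g0),
      (a 1 0 0 - g0) - min (a 1 1 1 - f3) (a 1 0 0 - g0),
      min (a 1 1 1 - f3) (a 1 0 0 - g0)],
    ![m2 - max (a 1 1 0 - f3) (a 1 0 1 - g0),
      (a 1 1 0 - f3) - min (a 1 1 0 - f3) (a 1 0 1 - g0),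
      (a 1 0 1 - g0) - min (a 1 1 0 - f3) (a 1 0 1 - g0),
      min (a 1 1 0 - f3) (a 1 0 1 - g0)],
    ![m3 - f3, f3, 0, 0]], ?_, ?_, ?_⟩
  · -- membership in Q
    rw [hQ]
    refine ⟨?_, ?_, ?_, ?_, ?_, ?_, ?_, ?_, ?_⟩
    · intro i j
      fin_cases i <;> fin_cases j <;> simp <;> (try constructor) <;>
        linarith [hg00, hg0m0, hf30, hf3m3, hmin10, hmin20, hmax1, hmax2,
          hmin1a, hmin1b, hmin2a, hmin2b, hm0nn, hm3nn]
    all_goals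
      simp only [Matrix.cons_val_zero, Matrix.cons_val_one, Matrix.cons_val_two,
        Matrix.cons_val_three, Matrix.head_cons, Matrix.tail_cons]
    · linarith [hr1, e1, e3]
    · linarith [hr2, e2, e4]
    · linarith
    · linarith
    · linarith [hr2, e5, e7]
    · linarith [hr1, e6, e8]
    · linarith
    · linarith
  · -- F is maximized
    intro q hq
    have hqm := hqbm q hq
    rw [hQ] at hq
    obtain ⟨hp, c1, c2, c3, c4, c5, c6, c7, c8⟩ := hq
    simp only [Fin.sum_univ_four, Matrix.cons_val_zero, Matrix.cons_val_one,
      Matrix.cons_val_two, Matrix.cons_val_three, Matrix.head_cons, Matrix.tail_cons]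
    rcases hfc with hv | hv | hv <;>
      linarith [hqm, hp 0 0, hp 0 1, hp 0 2, hp 0 3, hp 1 0, hp 1 1, hp 1 2, hp 1 3,
        hp 2 0, hp 2 1, hp 2 2, hp 2 3, hp 3 0, hp 3 1, hp 3 2, hp 3 3]
  · -- G is minimized
    intro q hq
    have hqm := hqbm q hq
    rw [hQ] at hq
    obtain ⟨hp, c1, c2, c3, c4, c5, c6, c7, c8⟩ := hq
    simp only [Fin.sum_univ_four, Matrix.cons_val_zero, Matrix.cons_val_one,
      Matrix.cons_val_two, Matrix.cons_val_three, Matrix.head_cons, Matrix.tail_cons]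
    rcases hgc with hv | hv | hv <;>
      linarith [hqm, hp 0 0, hp 0 1, hp 0 2, hp 0 3, hp 1 0, hp 1 1, hp 1 2, hp 1 3,
        hp 2 0, hp 2 1, hp 2 2, hp 2 3, hp 3 0, hp 3 1, hp 3 2, hp 3 3]
end
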